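/- For every positive integer n and reals d₁,…,dₙ with dᵢ ≥ 1, if s₁ = Σᵢ dᵢ ≥ 10 then (4 - s₁)²/((s₁² + s₂)/2 - 3(s₁ - 2)) > 4/9, where s₂ = Σᵢ dᵢ². In particular, any Chern-ratio point with x-coordinate c₁³/(c₁c₂) ≤ 4/9 must have s₁ ≤ 9. -/
import Mathlib


open Finset

/-- `s_j = ∑ i, dᵢ^j`. -/
def sPow (n : ℕ) (d : Fin n → ℝ) (j : ℕ) : ℝ := ∑ i, (d i) ^ j

/-- `c₁ = 4 - s₁`. -/
def chern1 (n : ℕ) (d : Fin n → ℝ) : ℝ := 4 - sPow n d 1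

/-- `c₂ = (s₁² + s₂)/2 - 3(s₁ - 2)`. -/
noncomputable def chern2 (n : ℕ) (d : Fin n → ℝ) : ℝ :=
  (sPow n d 1 ^ 2 + sPow n d 2) / 2 - 3 * (sPow n d 1 - 2)

/-- `c₃ = -(s₁³ + 3s₁s₂ + 2s₃)/6 + (s₁² + s₂) - 3s₁ + 4`. -/
noncomputable def chern3 (n : ℕ) (d : Fin n → ℝ) : ℝ :=
  -(sPow n d 1 ^ 3 + 3 * sPow n d 1 * sPow n d 2 + 2 * sPow n d 3) / 6
    + (sPow n d 1 ^ 2 + sPow n d 2) - 3 * sPow n d 1 + 4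

theorem xCoordinate_gt_four_ninths_of_large_degree
    (n : ℕ) (hn : 0 < n) (d : Fin n → ℝ) (hd : ∀ i, 1 ≤ d i)
    (hs : 10 ≤ ∑ i, d i) :
    (4/9 : ℝ) < (4 - ∑ i, d i) ^ 2 /
      (((∑ i, d i) ^ 2 + ∑ i, (d i) ^ 2) / 2 - 3 * ((∑ i, d i) - 2)) := by
  set S := ∑ i, d i with hS
  set T := ∑ i, (d i) ^ 2 with hT
  have hTle : T ≤ S ^ 2 :=
    Finset.sum_sq_le_sq_sum_of_nonneg (fun i _ => le_trans zero_le_one (hd i))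
  have hT0 : 0 ≤ T := Finset.sum_nonneg fun i _ => sq_nonneg _
  have hD : 0 < (S ^ 2 + T) / 2 - 3 * (S - 2) := by nlinarith
  rw [div_lt_div_iff₀ (by norm_num) hD]
  nlinarith
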